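/- Suppose there exists a function φ: N → R such that Σ_{k=0}^∞ (2d/(2d+1))^{φ(k)} < ∞ and, for every x ∈ Z^d, Σ_{k=0}^∞ P_x( l_k(D^c) ≥ k - φ(k) ) < ∞. Then for every x ∈ Z^d, E_x[ Σ_{k=0}^∞ ∏_{z ∈ D} (2d/(2d+1))^{l_k(z)} ] < ∞; equivalently, the expected survival time of the killed random walk associated to D is finite for every starting point. -/

import Mathlib

open MeasureTheory ProbabilityTheory
open scoped ENNReal

/-- The `j`-th unit step in `ℤ^d`: for `j < d` it is `+e_j`, and for `d ≤ j < 2d` it is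
`-e_{j-d}`.  When `j` is uniform on `{0, …, 2d-1}`, this is a uniformly chosen nearest-neighbour
step. -/
def dirVec (d : ℕ) (j : ℕ) : Fin d → ℤ := fun i =>
  if j < d then (if (i : ℕ) = j then 1 else 0) else (if (i : ℕ) + d = j then -1 else 0)

/-- The simple random walk on `ℤ^d` started at `x`, driven by the seed sequence `u`: at step `n`
it moves by `dirVec d (u n)`.  When the seeds are i.i.d. uniform on `{0, …, 2d-1}`, this is the
discrete-time simple random walk. -/
def srw (d : ℕ) (x : Fin d → ℤ) (u : ℕ → ℕ) : ℕ → Fin d → ℤ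
  | 0 => x
  | n + 1 => srw d x u n + dirVec d (u n)

/-- The local time `l_k(z)`: the number of visits to `z` strictly before time `k`. -/
def locTime (d : ℕ) (x : Fin d → ℤ) (u : ℕ → ℕ) (k : ℕ) (z : Fin d → ℤ) : ℕ :=
  ((Finset.range k).filter (fun j => srw d x u j = z)).card

open Classical in
/-- The product `∏_{z ∈ D} (2d/(2d+1))^{l_k(z)}`, valued in `[0,∞]`; since `l_k(z) = 0` for all
but finitely many `z`, it is the corresponding finite product over the sites of `D` visited
strictly before time `k`. -/
noncomputable def prodD (d : ℕ) (D : Set (Fin d → ℤ)) (x : Fin d → ℤ) (u : ℕ → ℕ)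
    (k : ℕ) : ℝ≥0∞ :=
  ∏ z ∈ ((Finset.range k).image (fun j => srw d x u j)).filter (fun z => z ∈ D),
    (((2 * d : ℕ) : ℝ≥0∞) / ((2 * d + 1 : ℕ) : ℝ≥0∞)) ^ (locTime d x u k z)

open Classical in
/-- The killed random walk associated to the set `D` of dissipative sites, started at `x` and
driven by the seed sequence `w`; `none` is the cemetery state.  From a site not in `D` it moves
by the uniform step `w n % (2d)`; from a site in `D`, with `r = w n % (2d+1)` it is killed if
`r = 2d` and otherwise moves by step `r`.  When the seeds are i.i.d. uniform on
`{0, …, 2d(2d+1) - 1}`, from a site in `D` the walk moves to each neighbour with probability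
`1/(2d+1)` and is killed with probability `1/(2d+1)`, and from a site not in `D` it moves to each
neighbour with probability `1/(2d)`. -/
noncomputable def kwalk (d : ℕ) (D : Set (Fin d → ℤ)) (x : Fin d → ℤ) (w : ℕ → ℕ) :
    ℕ → Option (Fin d → ℤ)
  | 0 => some x
  | n + 1 =>
    match kwalk d D x w n with
    | none => none
    | some y =>
      if y ∈ D then
        (if w n % (2 * d + 1) = 2 * d then none
         else some (y + dirVec d (w n % (2 * d + 1))))
      else some (y + dirVec d (w n % (2 * d)))

/-- The survival time `T̂` of the killed random walk: the step at which it is killed, as an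
element of `[0,∞]` (it equals `∞` if the walk is never killed). -/
noncomputable def killTime (d : ℕ) (D : Set (Fin d → ℤ)) (x : Fin d → ℤ) (w : ℕ → ℕ) : ℝ≥0∞ :=
  sInf {t : ℝ≥0∞ | ∃ k : ℕ, t = (k : ℝ≥0∞) ∧ kwalk d D x w k = none}

/-- The hitting (return) time `τ(D) = inf {k ≥ 1 : X_k ∈ D}` of the set `D` by the simple random
walk, as an element of `[0,∞]` (it equals `∞` if `D` is never hit at a positive time). -/
noncomputable def retTime (d : ℕ) (D : Set (Fin d → ℤ)) (x : Fin d → ℤ) (u : ℕ → ℕ) : ℝ≥0∞ :=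
  sInf {t : ℝ≥0∞ | ∃ k : ℕ, t = (k : ℝ≥0∞) ∧ 1 ≤ k ∧ srw d x u k ∈ D}

lemma srw_congr (d : ℕ) (x : Fin d → ℤ) (u v : ℕ → ℕ) :
    ∀ j, (∀ m, m < j → u m = v m) → srw d x u j = srw d x v j
  | 0, _ => rfl
  | j + 1, h => by
    simp only [srw, srw_congr d x u v j (fun m hm => h m (hm.trans (Nat.lt_succ_self j))),
      h j (Nat.lt_succ_self j)]

open Classical in
lemma prodD_eq_pow (d : ℕ) (D : Set (Fin d → ℤ)) (x : Fin d → ℤ) (u : ℕ → ℕ) (k : ℕ) :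
    prodD d D x u k = (((2 * d : ℕ) : ℝ≥0∞) / ((2 * d + 1 : ℕ) : ℝ≥0∞)) ^
      (((Finset.range k).filter (fun j => srw d x u j ∈ D)).card) := by
  classical
  rw [prodD, Finset.prod_pow_eq_pow_sum]
  congr 1
  have hsets : ((Finset.range k).filter (fun j => srw d x u j ∈ D)).image
      (fun j => srw d x u j)
      = ((Finset.range k).image (fun j => srw d x u j)).filter (fun z => z ∈ D) := by
    ext z
    simp only [Finset.mem_image, Finset.mem_filter, Finset.mem_range]
    constructor
    · rintro ⟨j, ⟨hj, hD⟩, rfl⟩; exact ⟨⟨j, hj, rfl⟩, hD⟩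
    · rintro ⟨⟨j, hj, rfl⟩, hD⟩; exact ⟨j, ⟨hj, hD⟩, rfl⟩
  rw [Finset.card_eq_sum_card_image (fun j => srw d x u j)
    ((Finset.range k).filter (fun j => srw d x u j ∈ D)), hsets]
  refine Finset.sum_congr rfl (fun z hz => ?_)
  simp only [Finset.mem_filter] at hz
  rw [locTime, Finset.filter_filter]
  congr 1
  apply Finset.filter_congr
  intro j hj
  constructor
  · exact fun h => ⟨h ▸ hz.2, h⟩
  · exact fun h => h.2

lemma measurable_cnt {Ω : Type} [MeasurableSpace Ω] {d : ℕ} (U : ℕ → Ω → Fin (2 * d))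
    (hU : ∀ n, Measurable (U n)) (S : Set (Fin d → ℤ)) [∀ z, Decidable (z ∈ S)]
    (x : Fin d → ℤ) (k : ℕ) :
    Measurable (fun ω => (((Finset.range k).filter
      (fun j => srw d x (fun m => (U m ω : ℕ)) j ∈ S)).card : ℕ)) := by
  have h1 : Measurable (fun ω => (fun m : Fin k => U m ω)) :=
    measurable_pi_lambda _ (fun m => hU m)
  have h2 : Measurable (fun v : Fin k → Fin (2 * d) =>
      (((Finset.range k).filter (fun j => srw d x
        (fun m => if h : m < k then (v ⟨m, h⟩ : ℕ) else 0) j ∈ S)).card : ℕ)) :=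
    measurable_of_countable _
  have heq : (fun ω => (((Finset.range k).filter
      (fun j => srw d x (fun m => (U m ω : ℕ)) j ∈ S)).card : ℕ)) =
      (fun v : Fin k → Fin (2 * d) =>
      (((Finset.range k).filter (fun j => srw d x
        (fun m => if h : m < k then (v ⟨m, h⟩ : ℕ) else 0) j ∈ S)).card : ℕ)) ∘
      (fun ω => (fun m : Fin k => U m ω)) := by
    funext ω
    simp only [Function.comp_apply]
    congr 1
    apply Finset.filter_congr
    intro j hj
    rw [Finset.mem_range] at hj
    rw [srw_congr d x (fun m => (U m ω : ℕ))
      (fun m => if h : m < k then ((U m ω : ℕ)) else 0) j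
      (fun m hm => by simp [hm.trans hj])]
  rw [heq]
  exact h2.comp h1

open Classical in
/-- Suppose there exists `φ : ℕ → ℝ` such that `Σ_k (2d/(2d+1))^{φ(k)} < ∞` and,
for every `x ∈ ℤ^d`, `Σ_k P_x(l_k(Dᶜ) ≥ k - φ(k)) < ∞`.  Then for every `x ∈ ℤ^d`,
`E_x[ Σ_{k=0}^∞ ∏_{z ∈ D} (2d/(2d+1))^{l_k(z)} ] < ∞`.  The simple random walk is encoded by
i.i.d. uniform seeds `U` on `(Ω, P)`. -/
theorem local_time_product_sum_finite_of_compl_local_time_condition (d : ℕ) (hd : 1 ≤ d)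
    (D : Set (Fin d → ℤ)) (φ : ℕ → ℝ)
    (hφ : Summable fun k : ℕ => ((2 * d : ℝ) / (2 * d + 1)) ^ (φ k)) :
    ∀ (Ω : Type) (_ : MeasurableSpace Ω) (P : Measure Ω), IsProbabilityMeasure P →
      ∀ U : ℕ → Ω → Fin (2 * d),
        (∀ n, Measurable (U n)) →
        iIndepFun U P →
        (∀ n j, P {ω | U n ω = j} = ((2 * d : ℕ) : ℝ≥0∞)⁻¹) →
        (∀ x : Fin d → ℤ,
          (∑' k : ℕ, P {ω | (k : ℝ) - φ k ≤
              (((Finset.range k).filter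
                (fun j => srw d x (fun m => (U m ω : ℕ)) j ∈ Dᶜ)).card : ℝ)}) < ⊤) →
        ∀ x : Fin d → ℤ,
          (∫⁻ ω, (∑' k : ℕ, prodD d D x (fun m => (U m ω : ℕ)) k) ∂P) < ⊤ := by
  
  intro Ω mΩ P hP U hU hind hunif hsum x
  classical
  set r : ℝ≥0∞ := ((2 * d : ℕ) : ℝ≥0∞) / ((2 * d + 1 : ℕ) : ℝ≥0∞) with hrdef
  set ρ : ℝ := (2 * d : ℝ) / (2 * d + 1) with hρdef
  have hdpos : (0 : ℝ) < 2 * d := by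
    have : (1 : ℝ) ≤ d := by exact_mod_cast hd
    linarith
  have hρ0 : 0 < ρ := by rw [hρdef]; positivity
  have hρ1 : ρ ≤ 1 := by
    rw [hρdef, div_le_one (by linarith)]; linarith
  have hrρ : r = ENNReal.ofReal ρ := by
    rw [hrdef, hρdef, ENNReal.ofReal_div_of_pos (by linarith)]
    push_cast
    rw [ENNReal.ofReal_add (by linarith) zero_le_one]
    simp [ENNReal.ofReal_mul, ENNReal.ofReal_natCast]
  have hr1 : r ≤ 1 := by rw [hrρ]; exact ENNReal.ofReal_le_one.mpr hρ1
  -- the counting functions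
  set Nf : ℕ → Ω → ℕ := fun k ω => ((Finset.range k).filter
      (fun j => srw d x (fun m => (U m ω : ℕ)) j ∈ D)).card with hNf
  set Mf : ℕ → Ω → ℕ := fun k ω => ((Finset.range k).filter
      (fun j => srw d x (fun m => (U m ω : ℕ)) j ∈ Dᶜ)).card with hMf
  have hN : ∀ k, Measurable (Nf k) := fun k => measurable_cnt U hU D x k
  have hM : ∀ k, Measurable (Mf k) := fun k => measurable_cnt U hU Dᶜ x k
  set s : ℕ → Set Ω := fun k => {ω | (k : ℝ) - φ k ≤ ((Mf k ω : ℕ) : ℝ)} with hs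
  have hsmeas : ∀ k, MeasurableSet (s k) := by
    intro k
    have : s k = (Mf k) ⁻¹' {n : ℕ | (k : ℝ) - φ k ≤ (n : ℝ)} := rfl
    rw [this]
    exact hM k (by trivial)
  have hNMk : ∀ k ω, Nf k ω + Mf k ω = k := by
    intro k ω
    rw [hNf, hMf]
    simp only [Set.mem_compl_iff]
    rw [Finset.card_filter_add_card_filter_not, Finset.card_range]
  -- pointwise bound
  have key : ∀ k ω, prodD d D x (fun m => (U m ω : ℕ)) k ≤
      (s k).indicator (1 : Ω → ℝ≥0∞) ω + ENNReal.ofReal (ρ ^ φ k) := by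
    intro k ω
    by_cases hω : ω ∈ s k
    · have h1 : prodD d D x (fun m => (U m ω : ℕ)) k ≤ 1 := by
        rw [prodD_eq_pow]; exact pow_le_one' hr1 _
      calc prodD d D x (fun m => (U m ω : ℕ)) k ≤ 1 := h1
        _ = (s k).indicator (1 : Ω → ℝ≥0∞) ω := by rw [Set.indicator_of_mem hω]; rfl
        _ ≤ _ := le_self_add
    · have hlt : φ k < ((Nf k ω : ℕ) : ℝ) := by
        have h1 : ((Mf k ω : ℕ) : ℝ) < (k : ℝ) - φ k := lt_of_not_ge hω
        have h2 : ((Nf k ω : ℕ) : ℝ) + ((Mf k ω : ℕ) : ℝ) = (k : ℝ) := by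
          exact_mod_cast congrArg (Nat.cast : ℕ → ℝ) (hNMk k ω)
        linarith
      have h3 : prodD d D x (fun m => (U m ω : ℕ)) k ≤ ENNReal.ofReal (ρ ^ φ k) := by
        rw [prodD_eq_pow]
        calc r ^ (Nf k ω) = r ^ (((Nf k ω : ℕ) : ℝ)) := by
              rw [← ENNReal.rpow_natCast]
          _ ≤ r ^ φ k := ENNReal.rpow_le_rpow_of_exponent_ge hr1 hlt.le
          _ = ENNReal.ofReal (ρ ^ φ k) := by
              rw [hrρ, ENNReal.ofReal_rpow_of_pos hρ0]
      exact h3.trans le_add_self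
  have hmeasprod : ∀ k, Measurable (fun ω => prodD d D x (fun m => (U m ω : ℕ)) k) := by
    intro k
    have : (fun ω => prodD d D x (fun m => (U m ω : ℕ)) k) =
        (fun n : ℕ => r ^ n) ∘ (Nf k) := by
      funext ω; exact prodD_eq_pow d D x _ k
    rw [this]
    exact (measurable_of_countable _).comp (hN k)
  rw [lintegral_tsum (fun k => (hmeasprod k).aemeasurable)]
  have hb : ∀ k, (∫⁻ ω, prodD d D x (fun m => (U m ω : ℕ)) k ∂P) ≤
      P (s k) + ENNReal.ofReal (ρ ^ φ k) := by
    intro k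
    calc (∫⁻ ω, prodD d D x (fun m => (U m ω : ℕ)) k ∂P)
        ≤ ∫⁻ ω, ((s k).indicator (1 : Ω → ℝ≥0∞) ω + ENNReal.ofReal (ρ ^ φ k)) ∂P :=
          lintegral_mono (key k)
      _ = P (s k) + ENNReal.ofReal (ρ ^ φ k) := by
          rw [lintegral_add_right _ measurable_const, lintegral_indicator_one (hsmeas k),
            lintegral_const, measure_univ, mul_one]
  refine lt_of_le_of_lt (ENNReal.tsum_le_tsum hb) ?_
  rw [ENNReal.tsum_add]
  refine ENNReal.add_lt_top.mpr ⟨?_, ?_⟩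
  · exact hsum x
  · rw [← ENNReal.ofReal_tsum_of_nonneg (fun k => Real.rpow_nonneg hρ0.le _) hφ]
    exact ENNReal.ofReal_lt_top
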